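/- The polytope P(M) of a locked system M is integral, i.e., all extreme points of P(M) have coordinates in {0,1}. -/

import Mathlib

open Finset

variable {α : Type*} [Fintype α] [DecidableEq α]

/-- A family of subsets is a partition of the ground set `E = univ`. -/
def IsPartitionFam (C : Finset (Finset α)) : Prop :=
  (∀ A ∈ C, A.Nonempty) ∧ ∀ e : α, ∃! A, A ∈ C ∧ e ∈ A

/-- The downward decomposition property: `X` verifies (P1) or (P2) of
axiom (L17). -/
inductive DecompDown (P L : Finset (Finset α)) (r : Finset α → ℕ) :
    Finset α → Prop
  | empty : DecompDown P L r ∅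
  | viaLocked (X l : Finset α) : l ∈ L → l ⊂ X → r X = r l + r (X \ l) →
      DecompDown P L r (X \ l) → DecompDown P L r X
  | viaParallel (X p : Finset α) : p ∈ P → (p ∩ X).Nonempty →
      r X = r p + r (X \ p) → DecompDown P L r (X \ p) → DecompDown P L r X

/-- The upward decomposition property: `X` verifies (P3) or (P4) of
axiom (L17). -/
inductive DecompUp (S L : Finset (Finset α)) (r : Finset α → ℕ) :
    Finset α → Prop
  | full : DecompUp S L r Finset.univ
  | viaLocked (X l : Finset α) : l ∈ L → X ⊂ l →
      r X + r Finset.univ = r l + r (X ∪ (Finset.univ \ l)) →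
      DecompUp S L r (X ∪ (Finset.univ \ l)) → DecompUp S L r X
  | viaSeries (X s : Finset α) : s ∈ S → (Finset.univ \ s) ∪ X ≠ Finset.univ →
      r X + r Finset.univ = r (Finset.univ \ s) + r (X ∪ s) + (s ∩ X).card →
      DecompUp S L r (X ∪ s) → DecompUp S L r X

/-- A locked system `M = (E, 𝒫, 𝒮, ℒ, r)` on the ground set `E = univ`,
satisfying Chaourar's locked axioms (L1)–(L19), with (L8)–(L11) taken in the
equivalent strengthened forms (LL8)–(LL11). -/
structure LockedSystem (α : Type*) [Fintype α] [DecidableEq α] where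
  P : Finset (Finset α)
  S : Finset (Finset α)
  L : Finset (Finset α)
  r : Finset α → ℕ
  ax1 : (Finset.univ : Finset α).Nonempty
  ax2P : IsPartitionFam P
  ax2S : IsPartitionFam S
  ax3 : ∀ p ∈ P, ∀ s ∈ S, (p ∩ s).Nonempty → p.card = 1 ∨ s.card = 1
  ax4 : ∀ l ∈ L, l.Nonempty ∧ l ≠ Finset.univ ∧ l ∉ P ∧ l ∉ S
  ax5 : ∀ X ∈ P ∪ S, ∀ l ∈ L, X ∩ l = ∅ ∨ X ⊆ l
  ax7 : r ∅ = 0 ∧ ∀ X, r X ≤ r Finset.univ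
  ax8 : ∀ p ∈ P, r p = 1
  ax9 : ∀ p ∈ P, r (Finset.univ \ p) = r Finset.univ
  ax10 : ∀ s ∈ S, r s = s.card
  ax11 : ∀ s ∈ S, r (Finset.univ \ s) + s.card = r Finset.univ + 1
  ax12 : ∀ l ∈ L, 2 ≤ r l ∧ r Finset.univ + 2 ≤ r l + (Finset.univ \ l).card
  ax13 : ∀ X ∈ P ∪ L ∪ {∅, Finset.univ}, ∀ Y ∈ P ∪ L ∪ {∅, Finset.univ},
      X ⊂ Y → r X < r Y
  ax14 : ∀ X ∈ P ∪ S ∪ L ∪ {∅, Finset.univ},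
      ∀ Y ∈ P ∪ S ∪ L ∪ {∅, Finset.univ},
      r (X ∩ Y) + r (X ∪ Y) ≤ r X + r Y
  ax15 : ∀ l ∈ L, ∀ X Y : Finset α, l = X ∪ Y → X ∩ Y = ∅ → X.Nonempty →
      Y.Nonempty → r l < r X + r Y
  ax16 : ∀ l ∈ L, ∀ X Y : Finset α, l = X ∩ Y → X ∪ Y = Finset.univ →
      X ≠ Finset.univ → Y ≠ Finset.univ → r l + r Finset.univ < r X + r Y
  ax17 : ∀ X : Finset α, X ∉ P → X ∉ S → X ∉ L → X ≠ ∅ → X ≠ Finset.univ →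
      DecompDown P L r X ∨ DecompUp S L r X
  ax18 : ∀ l1 ∈ L, ∀ l2 ∈ L, (l1 ∩ l2).Nonempty → l1 ∩ l2 ∉ L →
      DecompDown P L r (l1 ∩ l2)
  ax19 : ∀ l1 ∈ L, ∀ l2 ∈ L, l1 ∪ l2 ≠ Finset.univ → l1 ∪ l2 ∉ L →
      DecompUp S L r (l1 ∪ l2)

namespace LockedSystem

/-- The polytope `P(M)` of a locked system `M`, defined by `x(E) = r(E)`,
`x(P) ≤ 1` for `P ∈ 𝒫`, `x(S) ≥ |S| − 1` for `S ∈ 𝒮`, and `x(L) ≤ r(L)`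
for `L ∈ ℒ`. -/
def polytope (M : LockedSystem α) : Set (α → ℝ) :=
  {x | (∑ e, x e) = M.r Finset.univ ∧
    (∀ p ∈ M.P, ∑ e ∈ p, x e ≤ 1) ∧
    (∀ s ∈ M.S, (s.card : ℝ) - 1 ≤ ∑ e ∈ s, x e) ∧
    (∀ l ∈ M.L, ∑ e ∈ l, x e ≤ M.r l)}

end LockedSystem

section Aux

variable (M : LockedSystem α) {x : α → ℝ}

/-- Uniqueness of classes in a partition family. -/
lemma partFam_eq {C : Finset (Finset α)} (h : IsPartitionFam C) {A B : Finset α} {e : α}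
    (hA : A ∈ C) (hB : B ∈ C) (heA : e ∈ A) (heB : e ∈ B) : A = B :=
  ExistsUnique.unique (h.2 e) ⟨hA, heA⟩ ⟨hB, heB⟩

/-- If a class has cardinality one and contains `f`, it is `{f}`. -/
lemma class_singleton {A : Finset α} {f : α} (h1 : A.card = 1) (hf : f ∈ A) : A = {f} := by
  obtain ⟨a, ha⟩ := Finset.card_eq_one.1 h1
  subst ha
  simpa using (Finset.mem_singleton.1 hf) ▸ rfl

lemma coord_le_one (hx : x ∈ M.polytope) (e : α) : x e ≤ 1 := by
  obtain ⟨p, ⟨hpP, hep⟩, _⟩ := M.ax2P.2 e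
  by_cases hp : p = {e}
  · have := hx.2.1 p hpP
    rw [hp] at this; simpa using this
  · have hcard : p.card ≠ 1 := by
      intro h1
      exact hp (class_singleton h1 hep)
    have hnn : ∀ f ∈ p.erase e, 0 ≤ x f := by
      intro f hf
      have hfp : f ∈ p := Finset.mem_of_mem_erase hf
      obtain ⟨s, ⟨hsS, hfs⟩, _⟩ := M.ax2S.2 f
      have h3 := M.ax3 p hpP s hsS ⟨f, Finset.mem_inter.2 ⟨hfp, hfs⟩⟩
      have hs1 : s.card = 1 := h3.resolve_left hcard
      have hseq : s = {f} := class_singleton hs1 hfs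
      have := hx.2.2.1 s hsS
      rw [hseq] at this; simpa using this
    have hsum : ∑ f ∈ p.erase e, x f + x e = ∑ f ∈ p, x f :=
      Finset.sum_erase_add p x hep
    have h0 : (0:ℝ) ≤ ∑ f ∈ p.erase e, x f := Finset.sum_nonneg hnn
    have h1 := hx.2.1 p hpP
    linarith

lemma coord_nonneg (hx : x ∈ M.polytope) (e : α) : 0 ≤ x e := by
  obtain ⟨s, ⟨hsS, hes⟩, _⟩ := M.ax2S.2 e
  by_cases hs : s = {e}
  · have := hx.2.2.1 s hsS
    rw [hs] at this; simpa using this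
  · have hcard : s.card ≠ 1 := by
      intro h1
      exact hs (class_singleton h1 hes)
    have hub : ∀ f ∈ s.erase e, x f ≤ 1 := by
      intro f hf
      have hfs : f ∈ s := Finset.mem_of_mem_erase hf
      obtain ⟨p, ⟨hpP, hfp⟩, _⟩ := M.ax2P.2 f
      have h3 := M.ax3 p hpP s hsS ⟨f, Finset.mem_inter.2 ⟨hfp, hfs⟩⟩
      have hp1 : p.card = 1 := h3.resolve_right hcard
      have hpeq : p = {f} := class_singleton hp1 hfp
      have := hx.2.1 p hpP
      rw [hpeq] at this; simpa using this
    have hsum : ∑ f ∈ s.erase e, x f + x e = ∑ f ∈ s, x f :=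
      Finset.sum_erase_add s x hes
    have hse : (s.erase e).card = s.card - 1 := Finset.card_erase_of_mem hes
    have hcpos : 1 ≤ s.card := Finset.card_pos.2 ⟨e, hes⟩
    have hub2 : ∑ f ∈ s.erase e, x f ≤ (s.card : ℝ) - 1 := by
      calc ∑ f ∈ s.erase e, x f ≤ ∑ _f ∈ s.erase e, (1:ℝ) := Finset.sum_le_sum hub
        _ = ((s.erase e).card : ℝ) := by simp
        _ = (s.card : ℝ) - 1 := by rw [hse]; push_cast [Nat.cast_sub hcpos]; ring
    have h1 := hx.2.2.1 s hsS
    linarith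

lemma lemA_down (hx : x ∈ M.polytope) {X : Finset α}
    (hX : DecompDown M.P M.L M.r X) : ∑ e ∈ X, x e ≤ (M.r X : ℝ) := by
  induction hX with
  | empty => simp [M.ax7.1]
  | viaLocked X l hl hlX hr _ ih =>
      have hsum : ∑ e ∈ X \ l, x e + ∑ e ∈ l, x e = ∑ e ∈ X, x e :=
        Finset.sum_sdiff hlX.subset
      have h1 : ∑ e ∈ l, x e ≤ (M.r l : ℝ) := hx.2.2.2 l hl
      have hrc : (M.r X : ℝ) = M.r l + M.r (X \ l) := by exact_mod_cast congrArg (Nat.cast (R := ℝ)) hr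
      linarith
  | viaParallel X p hp hpX hr _ ih =>
      have h2 : ∑ e ∈ X ∩ p, x e ≤ ∑ e ∈ p, x e :=
        Finset.sum_le_sum_of_subset_of_nonneg Finset.inter_subset_right
          (fun i hi _ => coord_nonneg M hx i)
      have h1 : ∑ e ∈ p, x e ≤ 1 := hx.2.1 p hp
      have hsum : ∑ e ∈ X \ p, x e + ∑ e ∈ X ∩ p, x e = ∑ e ∈ X, x e := by
        rw [← Finset.sdiff_inter_self_left X p]
        exact Finset.sum_sdiff Finset.inter_subset_left
      have hrp : M.r p = 1 := M.ax8 p hp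
      have hrc : (M.r X : ℝ) = M.r p + M.r (X \ p) := by exact_mod_cast congrArg (Nat.cast (R := ℝ)) hr
      rw [hrp] at hrc
      push_cast at hrc
      linarith

lemma lemA_up (hx : x ∈ M.polytope) {X : Finset α}
    (hX : DecompUp M.S M.L M.r X) : ∑ e ∈ X, x e ≤ (M.r X : ℝ) := by
  induction hX with
  | full => exact le_of_eq hx.1
  | viaLocked X l hl hXl hr _ ih =>
      have hdisj : Disjoint X (Finset.univ \ l) := by
        refine Finset.disjoint_left.2 fun a haX ha => ?_
        exact (Finset.mem_sdiff.1 ha).2 (hXl.subset haX)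
      have hsum : ∑ e ∈ X ∪ (Finset.univ \ l), x e
          = ∑ e ∈ X, x e + ∑ e ∈ Finset.univ \ l, x e := Finset.sum_union hdisj
      have hsum2 : ∑ e ∈ Finset.univ \ l, x e + ∑ e ∈ l, x e = ∑ e, x e :=
        Finset.sum_sdiff (Finset.subset_univ l)
      have hl1 : ∑ e ∈ l, x e ≤ (M.r l : ℝ) := hx.2.2.2 l hl
      have htot : ∑ e, x e = (M.r Finset.univ : ℝ) := hx.1
      have hrc : (M.r X : ℝ) + M.r Finset.univ
          = M.r l + M.r (X ∪ (Finset.univ \ l)) := by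
        exact_mod_cast congrArg (Nat.cast (R := ℝ)) hr
      linarith
  | viaSeries X s hs hne hr _ ih =>
      have hsum : ∑ e ∈ X ∪ s, x e = ∑ e ∈ X, x e + ∑ e ∈ s \ X, x e := by
        rw [← Finset.union_sdiff_self_eq_union]
        exact Finset.sum_union Finset.disjoint_sdiff
      have hsum2 : ∑ e ∈ s \ X, x e + ∑ e ∈ s ∩ X, x e = ∑ e ∈ s, x e := by
        rw [← Finset.sdiff_inter_self_left s X]
        exact Finset.sum_sdiff Finset.inter_subset_left
      have hbound : ∑ e ∈ s ∩ X, x e ≤ ((s ∩ X).card : ℝ) := by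
        calc ∑ e ∈ s ∩ X, x e ≤ ∑ _e ∈ s ∩ X, (1:ℝ) :=
              Finset.sum_le_sum (fun i _ => coord_le_one M hx i)
          _ = ((s ∩ X).card : ℝ) := by simp
      have hcon : (s.card : ℝ) - 1 ≤ ∑ e ∈ s, x e := hx.2.2.1 s hs
      have h11 := M.ax11 s hs
      have h11c : (M.r (Finset.univ \ s) : ℝ) + s.card = M.r Finset.univ + 1 := by
        exact_mod_cast congrArg (Nat.cast (R := ℝ)) h11
      have hrc : (M.r X : ℝ) + M.r Finset.univ
          = M.r (Finset.univ \ s) + M.r (X ∪ s) + (s ∩ X).card := by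
        exact_mod_cast congrArg (Nat.cast (R := ℝ)) hr
      linarith

lemma lemA (hx : x ∈ M.polytope) (X : Finset α) : ∑ e ∈ X, x e ≤ (M.r X : ℝ) := by
  by_cases hP : X ∈ M.P
  · rw [M.ax8 X hP]; exact_mod_cast hx.2.1 X hP
  by_cases hS : X ∈ M.S
  · rw [M.ax10 X hS]
    calc ∑ e ∈ X, x e ≤ ∑ _e ∈ X, (1:ℝ) :=
          Finset.sum_le_sum (fun i _ => coord_le_one M hx i)
      _ = (X.card : ℝ) := by simp
  by_cases hL : X ∈ M.L
  · exact hx.2.2.2 X hL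
  by_cases hE : X = ∅
  · subst hE; simp [M.ax7.1]
  by_cases hU : X = Finset.univ
  · subst hU; exact le_of_eq hx.1
  rcases M.ax17 X hP hS hL hE hU with h | h
  · exact lemA_down M hx h
  · exact lemA_up M hx h

end Aux


section Aux2

variable (M : LockedSystem α) {x : α → ℝ}

/-- Tightness witness: if a set with the downward decomposition property is tight,
then every element of it lies in a tight parallel class or a tight locked subset. -/
lemma lemD (hx : x ∈ M.polytope) {X : Finset α}
    (hX : DecompDown M.P M.L M.r X) :
    ∑ g ∈ X, x g = (M.r X : ℝ) → ∀ e ∈ X, ∃ C : Finset α, e ∈ C ∧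
      ((C ∈ M.P ∧ ∑ g ∈ C, x g = 1) ∨
        (C ∈ M.L ∧ C ⊆ X ∧ ∑ g ∈ C, x g = (M.r C : ℝ))) := by
  induction hX with
  | empty => intro _ e he; exact absurd he (Finset.notMem_empty e)
  | viaLocked X l hl hlX hr hsub ih =>
      intro htight e he
      have hsum : ∑ g ∈ X \ l, x g + ∑ g ∈ l, x g = ∑ g ∈ X, x g :=
        Finset.sum_sdiff hlX.subset
      have h1 : ∑ g ∈ l, x g ≤ (M.r l : ℝ) := hx.2.2.2 l hl
      have h2 : ∑ g ∈ X \ l, x g ≤ (M.r (X \ l) : ℝ) := lemA_down M hx hsub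
      have hrc : (M.r X : ℝ) = M.r l + M.r (X \ l) := by
        exact_mod_cast congrArg (Nat.cast (R := ℝ)) hr
      have hl_t : ∑ g ∈ l, x g = (M.r l : ℝ) := by linarith
      have hXl_t : ∑ g ∈ X \ l, x g = (M.r (X \ l) : ℝ) := by linarith
      by_cases hel : e ∈ l
      · exact ⟨l, hel, Or.inr ⟨hl, hlX.subset, hl_t⟩⟩
      · obtain ⟨C, heC, hC⟩ := ih hXl_t e (Finset.mem_sdiff.2 ⟨he, hel⟩)
        refine ⟨C, heC, ?_⟩
        rcases hC with h | ⟨hCL, hCsub, ht⟩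
        · exact Or.inl h
        · exact Or.inr ⟨hCL, hCsub.trans (Finset.sdiff_subset), ht⟩
  | viaParallel X p hp hpX hr hsub ih =>
      intro htight e he
      have h2 : ∑ g ∈ X ∩ p, x g ≤ ∑ g ∈ p, x g :=
        Finset.sum_le_sum_of_subset_of_nonneg Finset.inter_subset_right
          (fun i _ _ => coord_nonneg M hx i)
      have h1 : ∑ g ∈ p, x g ≤ 1 := hx.2.1 p hp
      have hsum : ∑ g ∈ X \ p, x g + ∑ g ∈ X ∩ p, x g = ∑ g ∈ X, x g := by
        rw [← Finset.sdiff_inter_self_left X p]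
        exact Finset.sum_sdiff Finset.inter_subset_left
      have h3 : ∑ g ∈ X \ p, x g ≤ (M.r (X \ p) : ℝ) := lemA_down M hx hsub
      have hrp : M.r p = 1 := M.ax8 p hp
      have hrc : (M.r X : ℝ) = M.r p + M.r (X \ p) := by
        exact_mod_cast congrArg (Nat.cast (R := ℝ)) hr
      rw [hrp] at hrc
      push_cast at hrc
      have hp_t : ∑ g ∈ p, x g = 1 := by linarith
      have hXp_t : ∑ g ∈ X \ p, x g = (M.r (X \ p) : ℝ) := by linarith
      by_cases hep : e ∈ p
      · exact ⟨p, hep, Or.inl ⟨hp, hp_t⟩⟩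
      · obtain ⟨C, heC, hC⟩ := ih hXp_t e (Finset.mem_sdiff.2 ⟨he, hep⟩)
        refine ⟨C, heC, ?_⟩
        rcases hC with h | ⟨hCL, hCsub, ht⟩
        · exact Or.inl h
        · exact Or.inr ⟨hCL, hCsub.trans (Finset.sdiff_subset), ht⟩

lemma sum_int_of_01 {A : Finset α} (h : ∀ g ∈ A, x g = 0 ∨ x g = 1) :
    ∃ n : ℤ, ∑ g ∈ A, x g = n := by
  classical
  induction A using Finset.induction with
  | empty => exact ⟨0, by simp⟩
  | @insert a s ha ih =>
      obtain ⟨n, hn⟩ := ih (fun g hg => h g (Finset.mem_insert_of_mem hg))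
      rcases h a (Finset.mem_insert_self a s) with h0 | h1
      · exact ⟨n, by rw [Finset.sum_insert ha, h0, hn]; simp⟩
      · exact ⟨n + 1, by rw [Finset.sum_insert ha, h1, hn]; push_cast; ring⟩

/-- In a tight set (integral right-hand side) containing a fractional element,
there is a second fractional element. -/
lemma exists_second (hx : x ∈ M.polytope) {A : Finset α} {z : ℤ}
    (hA : ∑ g ∈ A, x g = (z : ℝ)) {e : α} (he : e ∈ A) (he0 : x e ≠ 0) (he1 : x e ≠ 1) :
    ∃ f ∈ A, f ≠ e ∧ x f ≠ 0 ∧ x f ≠ 1 := by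
  classical
  by_contra hcon
  push_neg at hcon
  have h01 : ∀ g ∈ A.erase e, x g = 0 ∨ x g = 1 := by
    intro g hg
    by_cases hg0 : x g = 0
    · exact Or.inl hg0
    · exact Or.inr (hcon g (Finset.mem_of_mem_erase hg) (Finset.ne_of_mem_erase hg) hg0)
  obtain ⟨n, hn⟩ := sum_int_of_01 (x := x) h01
  have hsum : ∑ g ∈ A.erase e, x g + x e = ∑ g ∈ A, x g :=
    Finset.sum_erase_add A x he
  have hxe : x e = ((z - n : ℤ) : ℝ) := by push_cast; linarith
  have hpos : 0 < x e := lt_of_le_of_ne (coord_nonneg M hx e) (Ne.symm he0)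
  have hlt : x e < 1 := lt_of_le_of_ne (coord_le_one M hx e) he1
  have hzpos : (0 : ℤ) < z - n := by exact_mod_cast hxe ▸ hpos
  have hzge : (1 : ℤ) ≤ z - n := hzpos
  have : (1 : ℝ) ≤ x e := by rw [hxe]; exact_mod_cast hzge
  linarith

end Aux2


section Aux3

variable (M : LockedSystem α) {x : α → ℝ}

lemma exists_pair (hx : x ∈ M.polytope) {e0 : α} (he00 : x e0 ≠ 0) (he01 : x e0 ≠ 1) :
    ∃ e f : α, e ≠ f ∧
      (∀ p ∈ M.P, ∑ g ∈ p, x g = 1 → (e ∈ p ↔ f ∈ p)) ∧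
      (∀ s ∈ M.S, ∑ g ∈ s, x g = (s.card : ℝ) - 1 → (e ∈ s ↔ f ∈ s)) ∧
      (∀ l ∈ M.L, ∑ g ∈ l, x g = (M.r l : ℝ) → (e ∈ l ↔ f ∈ l)) := by
  classical
  by_cases hc1 : ∃ p ∈ M.P, ∑ g ∈ p, x g = 1 ∧ ∃ g ∈ p, x g ≠ 0 ∧ x g ≠ 1
  · obtain ⟨p, hpP, hpt, g, hgp, hg0, hg1⟩ := hc1
    obtain ⟨f, hfp, hfg, hf0, hf1⟩ :=
      exists_second M hx (z := 1) (by rw [hpt]; norm_num) hgp hg0 hg1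
    refine ⟨g, f, Ne.symm hfg, ?_, ?_, ?_⟩
    · intro q hq hqt
      constructor
      · intro hgq
        have hqp : q = p := partFam_eq M.ax2P hq hpP hgq hgp
        rw [hqp]; exact hfp
      · intro hfq
        have hqp : q = p := partFam_eq M.ax2P hq hpP hfq hfp
        rw [hqp]; exact hgp
    · intro s hsS hst
      have hkey : ∀ a ∈ p, x a ≠ 0 → a ∉ s := by
        intro a hap ha0 has
        rcases M.ax3 p hpP s hsS ⟨a, Finset.mem_inter.2 ⟨hap, has⟩⟩ with h | h
        · have hpg : p = {g} := class_singleton h hgp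
          rw [hpg] at hfp
          exact hfg (Finset.mem_singleton.1 hfp)
        · have hseq : s = {a} := class_singleton h has
          rw [hseq] at hst
          simp at hst
          exact ha0 hst
      exact iff_of_false (fun h => hkey g hgp hg0 h) (fun h => hkey f hfp hf0 h)
    · intro l hlL _
      have hsub : ∀ a ∈ p, a ∈ l → p ⊆ l := by
        intro a hap hal
        rcases M.ax5 p (Finset.mem_union_left _ hpP) l hlL with h | h
        · exfalso
          have : a ∈ p ∩ l := Finset.mem_inter.2 ⟨hap, hal⟩
          rw [h] at this
          exact Finset.notMem_empty a this
        · exact h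
      exact ⟨fun h => hsub g hgp h hfp, fun h => hsub f hfp h hgp⟩
  · by_cases hc2 : ∃ s ∈ M.S, ∑ g ∈ s, x g = (s.card : ℝ) - 1 ∧
        ∃ g ∈ s, x g ≠ 0 ∧ x g ≠ 1
    · obtain ⟨s, hsS, hst, g, hgs, hg0, hg1⟩ := hc2
      obtain ⟨f, hfs, hfg, hf0, hf1⟩ :=
        exists_second M hx (z := (s.card : ℤ) - 1) (by rw [hst]; push_cast; ring) hgs hg0 hg1
      refine ⟨g, f, Ne.symm hfg, ?_, ?_, ?_⟩
      · intro q hq hqt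
        exact iff_of_false (fun h => hc1 ⟨q, hq, hqt, g, h, hg0, hg1⟩)
          (fun h => hc1 ⟨q, hq, hqt, f, h, hf0, hf1⟩)
      · intro q hq _
        constructor
        · intro hgq
          have hqs : q = s := partFam_eq M.ax2S hq hsS hgq hgs
          rw [hqs]; exact hfs
        · intro hfq
          have hqs : q = s := partFam_eq M.ax2S hq hsS hfq hfs
          rw [hqs]; exact hgs
      · intro l hlL _
        have hsub : ∀ a ∈ s, a ∈ l → s ⊆ l := by
          intro a has hal
          rcases M.ax5 s (Finset.mem_union_right _ hsS) l hlL with h | h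
          · exfalso
            have : a ∈ s ∩ l := Finset.mem_inter.2 ⟨has, hal⟩
            rw [h] at this
            exact Finset.notMem_empty a this
          · exact h
        exact ⟨fun h => hsub g hgs h hfs, fun h => hsub f hfs h hgs⟩
    · by_cases hc3 : ∃ l ∈ M.L, ∑ g ∈ l, x g = (M.r l : ℝ) ∧
          ∃ g ∈ l, x g ≠ 0 ∧ x g ≠ 1
      · -- minimal tight locked set meeting the fractional elements
        set T : Finset (Finset α) := M.L.filter
          (fun l => ∑ g ∈ l, x g = (M.r l : ℝ) ∧ ∃ g ∈ l, x g ≠ 0 ∧ x g ≠ 1) with hT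
        have hTne : T.Nonempty := by
          obtain ⟨l, hl, h1, h2⟩ := hc3
          exact ⟨l, Finset.mem_filter.2 ⟨hl, h1, h2⟩⟩
        obtain ⟨A, hAT, hAmin⟩ := T.exists_min_image Finset.card hTne
        obtain ⟨hAL, hAt, g, hgA, hg0, hg1⟩ := Finset.mem_filter.1 hAT
        obtain ⟨f, hfA, hfg, hf0, hf1⟩ :=
          exists_second M hx (z := (M.r A : ℤ)) (by rw [hAt]; push_cast; ring) hgA hg0 hg1
        have key : ∀ a, a ∈ A → x a ≠ 0 → x a ≠ 1 →
            ∀ l ∈ M.L, ∑ g ∈ l, x g = (M.r l : ℝ) → a ∈ l → A ⊆ l := by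
          intro a haA ha0 ha1 l hlL hlt hal
          by_contra hnsub
          have hIne : (A ∩ l).Nonempty := ⟨a, Finset.mem_inter.2 ⟨haA, hal⟩⟩
          have hmemA : A ∈ M.P ∪ M.S ∪ M.L ∪ {∅, Finset.univ} :=
            Finset.mem_union_left _ (Finset.mem_union_right _ hAL)
          have hmemL : l ∈ M.P ∪ M.S ∪ M.L ∪ {∅, Finset.univ} :=
            Finset.mem_union_left _ (Finset.mem_union_right _ hlL)
          have h14 := M.ax14 A hmemA l hmemL
          have h14c : (M.r (A ∩ l) : ℝ) + M.r (A ∪ l) ≤ (M.r A : ℝ) + M.r l := by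
            exact_mod_cast h14
          have hIle := lemA M hx (A ∩ l)
          have hUle := lemA M hx (A ∪ l)
          have hsum : ∑ g ∈ A ∪ l, x g + ∑ g ∈ A ∩ l, x g
              = ∑ g ∈ A, x g + ∑ g ∈ l, x g := Finset.sum_union_inter
          have hI_t : ∑ g ∈ A ∩ l, x g = (M.r (A ∩ l) : ℝ) := by linarith
          have hcardlt : (A ∩ l).card < A.card := by
            apply Finset.card_lt_card
            rw [Finset.ssubset_iff_subset_ne]
            refine ⟨Finset.inter_subset_left, fun h => hnsub ?_⟩
            exact Finset.inter_eq_left.1 h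
          by_cases hIL : A ∩ l ∈ M.L
          · have hmem : A ∩ l ∈ T := Finset.mem_filter.2
              ⟨hIL, hI_t, a, Finset.mem_inter.2 ⟨haA, hal⟩, ha0, ha1⟩
            exact absurd (hAmin _ hmem) (not_le.2 hcardlt)
          · have hdd := M.ax18 A hAL l hlL hIne hIL
            obtain ⟨C, haC, hC⟩ := lemD M hx hdd hI_t a (Finset.mem_inter.2 ⟨haA, hal⟩)
            rcases hC with ⟨hCP, hCt⟩ | ⟨hCL, hCsub, hCt⟩
            · exact hc1 ⟨C, hCP, hCt, a, haC, ha0, ha1⟩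
            · have hmem : C ∈ T := Finset.mem_filter.2 ⟨hCL, hCt, a, haC, ha0, ha1⟩
              have hle : C.card ≤ (A ∩ l).card := Finset.card_le_card hCsub
              exact absurd (hAmin _ hmem) (not_le.2 (lt_of_le_of_lt hle hcardlt))
        refine ⟨g, f, Ne.symm hfg, ?_, ?_, ?_⟩
        · intro q hq hqt
          exact iff_of_false (fun h => hc1 ⟨q, hq, hqt, g, h, hg0, hg1⟩)
            (fun h => hc1 ⟨q, hq, hqt, f, h, hf0, hf1⟩)
        · intro q hq hqt
          exact iff_of_false (fun h => hc2 ⟨q, hq, hqt, g, h, hg0, hg1⟩)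
            (fun h => hc2 ⟨q, hq, hqt, f, h, hf0, hf1⟩)
        · intro l hlL hlt
          exact ⟨fun h => key g hgA hg0 hg1 l hlL hlt h hfA,
            fun h => key f hfA hf0 hf1 l hlL hlt h hgA⟩
      · -- no tight constraint contains a fractional element
        obtain ⟨f, _, hfe0, hf0, hf1⟩ :=
          exists_second M hx (z := (M.r Finset.univ : ℤ))
            (by rw [show ∑ g ∈ Finset.univ, x g = ∑ g, x g from rfl, hx.1]; push_cast; ring)
            (Finset.mem_univ e0) he00 he01
        refine ⟨e0, f, Ne.symm hfe0, ?_, ?_, ?_⟩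
        · intro q hq hqt
          exact iff_of_false (fun h => hc1 ⟨q, hq, hqt, e0, h, he00, he01⟩)
            (fun h => hc1 ⟨q, hq, hqt, f, h, hf0, hf1⟩)
        · intro q hq hqt
          exact iff_of_false (fun h => hc2 ⟨q, hq, hqt, e0, h, he00, he01⟩)
            (fun h => hc2 ⟨q, hq, hqt, f, h, hf0, hf1⟩)
        · intro q hq hqt
          exact iff_of_false (fun h => hc3 ⟨q, hq, hqt, e0, h, he00, he01⟩)
            (fun h => hc3 ⟨q, hq, hqt, f, h, hf0, hf1⟩)

end Aux3


/-- The polytope `P(M)` of a locked system is integral: every extreme point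
has all coordinates in `{0, 1}`. -/
theorem polytope_integral (M : LockedSystem α) (x : α → ℝ)
    (hx : x ∈ Set.extremePoints ℝ M.polytope) :
    ∀ e : α, x e = 0 ∨ x e = 1 := by
  classical
  obtain ⟨hxP, hext⟩ := hx
  intro e0
  by_contra he0
  push_neg at he0
  obtain ⟨e, f, hef, hP, hS, hL⟩ := exists_pair M hxP he0.1 he0.2
  set d : α → ℝ := fun g => (if g = e then (1:ℝ) else 0) - (if g = f then (1:ℝ) else 0)
    with hd
  have hdsum : ∀ A : Finset α, ∑ g ∈ A, d g
      = (if e ∈ A then (1:ℝ) else 0) - (if f ∈ A then (1:ℝ) else 0) := by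
    intro A
    rw [hd, Finset.sum_sub_distrib,
      Finset.sum_ite_eq' A e (fun _ => (1:ℝ)), Finset.sum_ite_eq' A f (fun _ => (1:ℝ))]
  have hdabs : ∀ A : Finset α, |∑ g ∈ A, d g| ≤ 1 := by
    intro A; rw [hdsum A]; split_ifs <;> norm_num
  have hdzero : ∀ A : Finset α, (e ∈ A ↔ f ∈ A) → ∑ g ∈ A, d g = 0 := by
    intro A h; rw [hdsum A]
    by_cases heA : e ∈ A
    · rw [if_pos heA, if_pos (h.1 heA)]; ring
    · rw [if_neg heA, if_neg (fun hfA => heA (h.2 hfA))]; ring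
  set val : Finset α → ℝ := fun A =>
    min (min (if A ∈ M.P ∧ ∑ g ∈ A, x g ≠ 1 then 1 - ∑ g ∈ A, x g else 1)
      (if A ∈ M.S ∧ ∑ g ∈ A, x g ≠ (A.card : ℝ) - 1
        then ∑ g ∈ A, x g - ((A.card : ℝ) - 1) else 1))
      (if A ∈ M.L ∧ ∑ g ∈ A, x g ≠ (M.r A : ℝ)
        then (M.r A : ℝ) - ∑ g ∈ A, x g else 1) with hval
  have hvaldef : ∀ A : Finset α, val A =
      min (min (if A ∈ M.P ∧ ∑ g ∈ A, x g ≠ 1 then 1 - ∑ g ∈ A, x g else 1)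
      (if A ∈ M.S ∧ ∑ g ∈ A, x g ≠ (A.card : ℝ) - 1
        then ∑ g ∈ A, x g - ((A.card : ℝ) - 1) else 1))
      (if A ∈ M.L ∧ ∑ g ∈ A, x g ≠ (M.r A : ℝ)
        then (M.r A : ℝ) - ∑ g ∈ A, x g else 1) := fun _ => rfl
  have hvalpos : ∀ A ∈ M.P ∪ M.S ∪ M.L, 0 < val A := by
    intro A _
    rw [hvaldef A]
    refine lt_min (lt_min ?_ ?_) ?_
    · split_ifs with h
      · exact sub_pos.2 (lt_of_le_of_ne (hxP.2.1 A h.1) h.2)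
      · norm_num
    · split_ifs with h
      · exact sub_pos.2 (lt_of_le_of_ne (hxP.2.2.1 A h.1) (Ne.symm h.2))
      · norm_num
    · split_ifs with h
      · exact sub_pos.2 (lt_of_le_of_ne (hxP.2.2.2 A h.1) h.2)
      · norm_num
  have hCne : (M.P ∪ M.S ∪ M.L).Nonempty := by
    obtain ⟨a, _⟩ := M.ax1
    obtain ⟨p, ⟨hp, _⟩, _⟩ := M.ax2P.2 a
    exact ⟨p, Finset.mem_union_left _ (Finset.mem_union_left _ hp)⟩
  set ε : ℝ := (M.P ∪ M.S ∪ M.L).inf' hCne val with hε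
  have hεpos : 0 < ε := (Finset.lt_inf'_iff _).2 (fun A hA => hvalpos A hA)
  have hεle : ∀ A ∈ M.P ∪ M.S ∪ M.L, ε ≤ val A := fun A hA => Finset.inf'_le _ hA
  have hmem : ∀ t : ℝ, |t| ≤ ε → (fun g => x g + t * d g) ∈ M.polytope := by
    intro t ht
    have httd : ∀ A : Finset α, |t * ∑ g ∈ A, d g| ≤ ε := by
      intro A
      rw [abs_mul]
      calc |t| * |∑ g ∈ A, d g| ≤ ε * 1 :=
            mul_le_mul ht (hdabs A) (abs_nonneg _) (le_of_lt hεpos)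
        _ = ε := mul_one ε
    have hsplit : ∀ A : Finset α,
        ∑ g ∈ A, (x g + t * d g) = ∑ g ∈ A, x g + t * ∑ g ∈ A, d g := by
      intro A; rw [Finset.sum_add_distrib, Finset.mul_sum]
    refine ⟨?_, ?_, ?_, ?_⟩
    · rw [hsplit Finset.univ, hdzero Finset.univ (by simp), mul_zero, add_zero]
      exact hxP.1
    · intro p hp
      rw [hsplit p]
      by_cases htight : ∑ g ∈ p, x g = 1
      · rw [hdzero p (hP p hp htight), mul_zero, add_zero, htight]
      · have h1 : ε ≤ 1 - ∑ g ∈ p, x g := by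
          have h0 : ε ≤ val p :=
            hεle p (Finset.mem_union_left _ (Finset.mem_union_left _ hp))
          rw [hvaldef p] at h0
          have h0' := h0.trans ((min_le_left _ _).trans (min_le_left _ _))
          rwa [if_pos ⟨hp, htight⟩] at h0'
        have h2 : t * ∑ g ∈ p, d g ≤ ε := (le_abs_self _).trans (httd p)
        linarith
    · intro s hs
      rw [hsplit s]
      by_cases htight : ∑ g ∈ s, x g = (s.card : ℝ) - 1
      · rw [hdzero s (hS s hs htight), mul_zero, add_zero, htight]
      · have h1 : ε ≤ ∑ g ∈ s, x g - ((s.card : ℝ) - 1) := by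
          have h0 : ε ≤ val s :=
            hεle s (Finset.mem_union_left _ (Finset.mem_union_right _ hs))
          rw [hvaldef s] at h0
          have h0' := h0.trans ((min_le_left _ _).trans (min_le_right _ _))
          rwa [if_pos ⟨hs, htight⟩] at h0'
        have h2 : -(t * ∑ g ∈ s, d g) ≤ ε := (neg_le_abs _).trans (httd s)
        linarith
    · intro l hl
      rw [hsplit l]
      by_cases htight : ∑ g ∈ l, x g = (M.r l : ℝ)
      · rw [hdzero l (hL l hl htight), mul_zero, add_zero, htight]
      · have h1 : ε ≤ (M.r l : ℝ) - ∑ g ∈ l, x g := by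
          have h0 : ε ≤ val l := hεle l (Finset.mem_union_right _ hl)
          rw [hvaldef l] at h0
          have h0' := h0.trans (min_le_right _ _)
          rwa [if_pos ⟨hl, htight⟩] at h0'
        have h2 : t * ∑ g ∈ l, d g ≤ ε := (le_abs_self _).trans (httd l)
        linarith
  have hy := hmem ε (by rw [abs_of_pos hεpos])
  have hz := hmem (-ε) (by rw [abs_neg, abs_of_pos hεpos])
  have hseg : x ∈ openSegment ℝ (fun g => x g + ε * d g) (fun g => x g + (-ε) * d g) := by
    refine ⟨1/2, 1/2, by norm_num, by norm_num, by norm_num, ?_⟩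
    funext g
    simp only [Pi.add_apply, Pi.smul_apply, smul_eq_mul]
    ring
  have hy_eq := hext hy hz hseg
  have h2 : x e + ε * d e = x e := congrFun hy_eq e
  have hde : d e = 1 := by simp [hd, hef]
  rw [hde] at h2
  linarith
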